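/- Let G be a profinite group and x ∈ G. If the conjugacy class {x^g : g ∈ G} has cardinality strictly less than 2^ℵ₀, then the conjugacy class is finite. -/

import Mathlib

open Set Cardinal Pointwise

/-- In a profinite group, a conjugacy class of cardinality strictly less than
the continuum is finite. -/
theorem stmt5 {G : Type*} [Group G] [TopologicalSpace G] [IsTopologicalGroup G]
    [CompactSpace G] [T2Space G] [TotallyDisconnectedSpace G]
    (x : G)
    (hcard : Cardinal.mk {y : G | ∃ g : G, y = g⁻¹ * x * g} < Cardinal.continuum) :
    {y : G | ∃ g : G, y = g⁻¹ * x * g}.Finite := by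
  by_contra hfin
  set S := {y : G | ∃ g : G, y = g⁻¹ * x * g} with hSdef
  set Z := Subgroup.centralizer ({x} : Set G) with hZdef
  have memZ : ∀ c : G, c ∈ Z ↔ x * c = c * x := by
    intro c
    simp [hZdef, Subgroup.mem_centralizer_iff]
  have hZclosed : IsClosed (Z : Set G) := by
    have h : (Z : Set G) = (fun c => (x * c) * (c * x)⁻¹) ⁻¹' {1} := by
      ext c
      simp only [SetLike.mem_coe, Set.mem_preimage, Set.mem_singleton_iff, mul_inv_eq_one]
      exact memZ c
    rw [h]
    exact isClosed_singleton.preimage (by continuity)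
  -- Step: every open subgroup containing Z strictly contains a smaller one
  have step : ∀ H : Subgroup G, IsOpen (H : Set G) → Z ≤ H →
      ∃ H' : Subgroup G, (IsOpen (H' : Set G) ∧ Z ≤ H') ∧ H' < H := by
    intro H Hopen hZH
    obtain ⟨g, hgH, hgZ⟩ : ∃ g, g ∈ H ∧ g ∉ Z := by
      by_contra hc
      push_neg at hc
      have hHZ : H = Z := le_antisymm hc hZH
      have hZopen : IsOpen (Z : Set G) := hHZ ▸ Hopen
      have : Finite (G ⧸ Z) := Subgroup.quotient_finite_of_isOpen Z hZopen
      have hwd : ∀ (g₁ g₂ : G), @Setoid.r G (QuotientGroup.leftRel Z) g₁ g₂ →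
          (fun g => g * x * g⁻¹) g₁ = (fun g => g * x * g⁻¹) g₂ := by
        intro g₁ g₂ h
        rw [QuotientGroup.leftRel_apply] at h
        have hc := (memZ _).mp h
        show g₁ * x * g₁⁻¹ = g₂ * x * g₂⁻¹
        have h2 : (g₁⁻¹ * g₂) * x * (g₁⁻¹ * g₂)⁻¹ = x := by
          rw [show (g₁⁻¹ * g₂) * x = x * (g₁⁻¹ * g₂) from hc.symm]
          group
        calc g₁ * x * g₁⁻¹
            = g₁ * ((g₁⁻¹ * g₂) * x * (g₁⁻¹ * g₂)⁻¹) * g₁⁻¹ := by rw [h2]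
          _ = g₂ * x * g₂⁻¹ := by group
      let f : G ⧸ Z → G := fun q => Quotient.liftOn' q (fun g => g * x * g⁻¹) hwd
      have hsub : S ⊆ Set.range f := by
        rintro y ⟨g, rfl⟩
        refine ⟨QuotientGroup.mk g⁻¹, ?_⟩
        show Quotient.liftOn' (Quotient.mk'' g⁻¹) _ hwd = g⁻¹ * x * g
        rw [Quotient.liftOn'_mk'']
        group
      exact hfin ((Set.finite_range f).subset hsub)
    have hU : IsOpen ((fun w => g * w) ⁻¹' (Z : Set G)ᶜ) :=
      hZclosed.isOpen_compl.preimage (by continuity)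
    have h1U : (1 : G) ∈ (fun w => g * w) ⁻¹' (Z : Set G)ᶜ := by
      simpa using hgZ
    obtain ⟨V, hVclopen, h1V, hVU⟩ := compact_exists_isClopen_in_isOpen hU h1U
    obtain ⟨N, hN⟩ :=
      IsTopologicalGroup.exist_openNormalSubgroup_sub_clopen_nhds_of_one hVclopen h1V
    have hgZN : g ∉ Z ⊔ N.toSubgroup := by
      intro hg
      have : g ∈ ((Z : Set G) * (N.toSubgroup : Set G)) := by
        rw [← Subgroup.mul_normal]
        exact_mod_cast hg
      obtain ⟨z, hz, n, hn, hzn⟩ := this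
      have hninv : n⁻¹ ∈ N.toSubgroup := inv_mem hn
      have : g * n⁻¹ ∉ Z := hVU (hN hninv)
      apply this
      rw [← hzn]
      simpa using hz
    refine ⟨H ⊓ (Z ⊔ N.toSubgroup), ⟨?_, le_inf hZH le_sup_left⟩, ?_⟩
    · rw [Subgroup.coe_inf]
      exact Hopen.inter (Subgroup.isOpen_mono le_sup_right N.isOpen)
    · refine lt_of_le_of_ne inf_le_left (fun he => hgZN ?_)
      have : g ∈ H ⊓ (Z ⊔ N.toSubgroup) := he.symm ▸ hgH
      exact (Subgroup.mem_inf.mp this).2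
  -- Build a strictly decreasing chain of open subgroups containing Z
  let T := {H : Subgroup G // IsOpen (H : Set G) ∧ Z ≤ H}
  have fstep : ∀ H : T, ∃ H' : T, H'.1 < H.1 := by
    rintro ⟨H, hO, hZ⟩
    obtain ⟨H', h1, h2⟩ := step H hO hZ
    exact ⟨⟨H', h1⟩, h2⟩
  choose f hf using fstep
  let seq : ℕ → T := fun n => f^[n] ⟨⊤, by simp, le_top⟩
  have hseq : ∀ n, seq (n + 1) = f (seq n) := fun n => Function.iterate_succ_apply' f n _
  let H : ℕ → Subgroup G := fun n => (seq n).1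
  have Hopen : ∀ n, IsOpen ((H n : Set G)) := fun n => (seq n).2.1
  have HZ : ∀ n, Z ≤ H n := fun n => (seq n).2.2
  have hlt : ∀ n, H (n + 1) < H n := fun n => by
    simpa [H, hseq n] using hf (seq n)
  have hle : ∀ n, H (n + 1) ≤ H n := fun n => le_of_lt (hlt n)
  have hts : ∀ n, ∃ t, t ∈ H n ∧ t ∉ H (n + 1) := by
    intro n
    obtain ⟨t, ht1, ht2⟩ := SetLike.exists_of_lt (hlt n)
    exact ⟨t, ht1, ht2⟩
  choose t ht1 ht2 using hts
  -- Binary sequences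
  let u : (ℕ → Bool) → ℕ → G := fun a n => if a n then t n else 1
  let P : (ℕ → Bool) → ℕ → G := fun a n => ((List.range n).map (u a)).prod
  have Psucc : ∀ a n, P a (n + 1) = P a n * u a n := by
    intro a n
    simp [P, List.range_succ]
  have humem : ∀ a n, u a n ∈ H n := by
    intro a n
    dsimp only [u]
    split
    · exact ht1 n
    · exact one_mem _
  let K : (ℕ → Bool) → ℕ → Set G := fun a n => (P a (n + 1)) • (H (n + 1) : Set G)
  have hKmem : ∀ a n y, y ∈ K a n ↔ (P a (n + 1))⁻¹ * y ∈ H (n + 1) := by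
    intro a n y
    rw [Set.mem_smul_set_iff_inv_smul_mem, smul_eq_mul]
    exact SetLike.mem_coe
  have hKdec : ∀ a n, K a (n + 1) ⊆ K a n := by
    intro a n y hy
    rw [hKmem] at hy ⊢
    have e : (P a (n + 1))⁻¹ * y = u a (n + 1) * ((P a (n + 2))⁻¹ * y) := by
      rw [Psucc a (n + 1)]; group
    rw [e]
    exact mul_mem (humem a (n + 1)) (hle (n + 1) hy)
  have hKne : ∀ a n, (K a n).Nonempty := fun a n =>
    ⟨P a (n + 1), by rw [hKmem, inv_mul_cancel]; exact one_mem _⟩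
  have hKcl : ∀ a n, IsClosed (K a n) := fun a n =>
    ((H (n + 1)).isClosed_of_isOpen (Hopen (n + 1))).smul _
  have hKex : ∀ a, (⋂ n, K a n).Nonempty := fun a =>
    IsCompact.nonempty_iInter_of_sequence_nonempty_isCompact_isClosed _ (hKdec a) (hKne a)
      ((hKcl a 0).isCompact) (hKcl a)
  choose gf hg using hKex
  have hgK : ∀ a n, gf a ∈ K a n := fun a n => Set.mem_iInter.mp (hg a) n
  have hPeq : ∀ (a b : ℕ → Bool) k, (∀ i < k, a i = b i) → P a k = P b k := by
    intro a b k
    induction k with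
    | zero => intro _; rfl
    | succ n ih =>
      intro h
      rw [Psucc, Psucc, ih (fun i hi => h i (Nat.lt_succ_of_lt hi))]
      have hab : a n = b n := h n (Nat.lt_succ_self n)
      simp [u, hab]
  -- Key separation
  have key : ∀ a b : ℕ → Bool, a ≠ b → (gf b)⁻¹ * gf a ∉ Z := by
    intro a b hab hZmem
    have hex : ∃ n, a n ≠ b n := by
      by_contra h
      push_neg at h
      exact hab (funext h)
    set k := Nat.find hex with hkdef
    have hk : a k ≠ b k := Nat.find_spec hex
    have hpre : ∀ i < k, a i = b i := fun i hi => not_not.mp (Nat.find_min hex hi)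
    have hq : P a k = P b k := hPeq a b k hpre
    have ha : (P a (k + 1))⁻¹ * gf a ∈ H (k + 1) := (hKmem a k _).mp (hgK a k)
    have hb : (P b (k + 1))⁻¹ * gf b ∈ H (k + 1) := (hKmem b k _).mp (hgK b k)
    have hc : (gf b)⁻¹ * gf a ∈ H (k + 1) := HZ (k + 1) hZmem
    have hme : (u b k)⁻¹ * u a k ∈ H (k + 1) := by
      have e : (u b k)⁻¹ * u a k =
          ((P b (k + 1))⁻¹ * gf b) * ((gf b)⁻¹ * gf a) * ((P a (k + 1))⁻¹ * gf a)⁻¹ := by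
        rw [Psucc a k, Psucc b k, hq]
        group
      rw [e]
      exact mul_mem (mul_mem hb hc) (inv_mem ha)
    rcases Bool.eq_false_or_eq_true (a k) with h1 | h1 <;>
      rcases Bool.eq_false_or_eq_true (b k) with h2 | h2
    · exact hk (h1.trans h2.symm)
    · simp only [u, h1, h2, if_true, if_false] at hme
      exact ht2 k (by simpa using inv_mem hme)
    · simp only [u, h1, h2, if_true, if_false] at hme
      exact ht2 k (by simpa using hme)
    · exact hk (h1.trans h2.symm)
  -- Build an injection from (ℕ → Bool) into S
  let F : (ℕ → Bool) → S := fun a =>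
    ⟨gf a * x * (gf a)⁻¹, ⟨(gf a)⁻¹, by group⟩⟩
  have hFinj : Function.Injective F := by
    intro a b hFab
    by_contra hab
    apply key a b hab
    rw [memZ]
    have heq : gf a * x * (gf a)⁻¹ = gf b * x * (gf b)⁻¹ := congrArg Subtype.val hFab
    have h := congrArg (fun w => (gf b)⁻¹ * w * gf a) heq
    calc x * ((gf b)⁻¹ * gf a)
        = (gf b)⁻¹ * (gf b * x * (gf b)⁻¹) * gf a := by group
      _ = (gf b)⁻¹ * (gf a * x * (gf a)⁻¹) * gf a := by rw [heq]
      _ = ((gf b)⁻¹ * gf a) * x := by group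
  have hle2 : Cardinal.continuum ≤ Cardinal.mk S := by
    have h1 : Nonempty ((ℕ → Bool) ↪ S) := ⟨⟨F, hFinj⟩⟩
    have h2 := Cardinal.lift_mk_le'.mpr h1
    have h3 : (#(ℕ → Bool) : Cardinal) = Cardinal.continuum := by
      rw [← Cardinal.two_power_aleph0]
      simp [Cardinal.mk_arrow]
    rw [h3, Cardinal.lift_continuum, Cardinal.lift_id'] at h2
    exact h2
  exact absurd hcard (not_lt.mpr hle2)
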